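/- For triples δ = (a_1,a_2,a_3) and δ' = (b_1,b_2,b_3) of vectors in ℝ³ with masses m_i > 0, define the mass inner product ⟨δ,δ'⟩ = Σ m_i a_i·b_i, the cross product δ×δ' = Σ m_i a_i×b_i ∈ ℝ³, and the Gram determinant |δ∧δ'|² = |δ|²|δ'|² - ⟨δ,δ'⟩². Then |δ∧δ'|² ≥ |δ×δ'|²; in particular, for a motion δ(t) with moment of inertia I = |δ|², kinetic energy T = (1/2)|δ̇|², and angular momentum Ω = δ×δ̇, one has 2IT - (1/4)İ² = |δ∧δ̇|² ≥ |Ω|². -/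

import Mathlib

noncomputable section
open Finset

/-- Euclidean 3-space. -/
abbrev E3 : Type := EuclideanSpace ℝ (Fin 3)

/-- The cross product on Euclidean 3-space. -/
def cross3 (u v : E3) : E3 :=
  (WithLp.equiv 2 (Fin 3 → ℝ)).symm
    ![u 1 * v 2 - u 2 * v 1, u 2 * v 0 - u 0 * v 2, u 0 * v 1 - u 1 * v 0]

/-- for triples `δ, δ'` of vectors in ℝ³ with masses `mᵢ > 0`,
the Gram determinant `|δ∧δ'|² = |δ|²|δ'|² - ⟨δ,δ'⟩²` (mass inner product)
dominates `|δ×δ'|²`; in particular, with `I = |δ|²`, `T = ½|δ'|²`,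
`İ = 2⟨δ,δ'⟩` and `Ω = δ×δ'`, one has `2IT - İ²/4 = |δ∧δ'|² ≥ |Ω|²`. -/
lemma cs4 (p q1 q2 q3 r s1 s2 s3 : ℝ) :
    (p*r + q1*s1 + q2*s2 + q3*s3)^2
      ≤ (p^2+q1^2+q2^2+q3^2)*(r^2+s1^2+s2^2+s3^2) := by
  nlinarith [sq_nonneg (p*s1 - q1*r), sq_nonneg (p*s2 - q2*r), sq_nonneg (p*s3 - q3*r),
    sq_nonneg (q1*s2 - q2*s1), sq_nonneg (q1*s3 - q3*s1), sq_nonneg (q2*s3 - q3*s2)]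

lemma amgm (L X Y : ℝ) (hX : 0 ≤ X) (hY : 0 ≤ Y) (h : L^2 ≤ X*Y) : L ≤ (X+Y)/2 := by
  nlinarith [sq_nonneg (X-Y)]

lemma pairwise (a1 a2 a3 b1 b2 b3 c1 c2 c3 d1 d2 d3 : ℝ) :
    ((a2*b3-a3*b2)*(c2*d3-c3*d2) + (a3*b1-a1*b3)*(c3*d1-c1*d3)
      + (a1*b2-a2*b1)*(c1*d2-c2*d1))
    + (a1*b1+a2*b2+a3*b3)*(c1*d1+c2*d2+c3*d3)
    ≤ ((a1^2+a2^2+a3^2)*(d1^2+d2^2+d3^2) + (c1^2+c2^2+c3^2)*(b1^2+b2^2+b3^2))/2 := by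
  apply amgm _ _ _ (by positivity) (by positivity)
  calc (((a2*b3-a3*b2)*(c2*d3-c3*d2) + (a3*b1-a1*b3)*(c3*d1-c1*d3)
      + (a1*b2-a2*b1)*(c1*d2-c2*d1))
    + (a1*b1+a2*b2+a3*b3)*(c1*d1+c2*d2+c3*d3))^2
      = ((a1*b1+a2*b2+a3*b3)*(c1*d1+c2*d2+c3*d3) + (a2*b3-a3*b2)*(c2*d3-c3*d2)
          + (a3*b1-a1*b3)*(c3*d1-c1*d3) + (a1*b2-a2*b1)*(c1*d2-c2*d1))^2 := by ring
    _ ≤ ((a1*b1+a2*b2+a3*b3)^2 + (a2*b3-a3*b2)^2 + (a3*b1-a1*b3)^2 + (a1*b2-a2*b1)^2)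
        * ((c1*d1+c2*d2+c3*d3)^2 + (c2*d3-c3*d2)^2 + (c3*d1-c1*d3)^2 + (c1*d2-c2*d1)^2) :=
        cs4 _ _ _ _ _ _ _ _
    _ = (a1^2+a2^2+a3^2)*(d1^2+d2^2+d3^2) * ((c1^2+c2^2+c3^2)*(b1^2+b2^2+b3^2)) := by ring
lemma main3 (m0 m1 m2 : ℝ) (hm0 : 0 ≤ m0) (hm1 : 0 ≤ m1) (hm2 : 0 ≤ m2)
    (a00 a01 a02 a10 a11 a12 a20 a21 a22 b00 b01 b02 b10 b11 b12 b20 b21 b22 : ℝ) :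
    (m0*(a01*b02-a02*b01)+m1*(a11*b12-a12*b11)+m2*(a21*b22-a22*b21))^2+(m0*(a02*b00-a00*b02)+m1*(a12*b10-a10*b12)+m2*(a22*b20-a20*b22))^2+(m0*(a00*b01-a01*b00)+m1*(a10*b11-a11*b10)+m2*(a20*b21-a21*b20))^2 ≤ (m0*(a00^2+a01^2+a02^2)+m1*(a10^2+a11^2+a12^2)+m2*(a20^2+a21^2+a22^2))*(m0*(b00^2+b01^2+b02^2)+m1*(b10^2+b11^2+b12^2)+m2*(b20^2+b21^2+b22^2)) - (m0*(a00*b00+a01*b01+a02*b02)+m1*(a10*b10+a11*b11+a12*b12)+m2*(a20*b20+a21*b21+a22*b22))^2 := by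
  have p01 := pairwise a00 a01 a02 b00 b01 b02 a10 a11 a12 b10 b11 b12
  have t01 : (0:ℝ) ≤ m0*m1*(((a00^2+a01^2+a02^2)*(b10^2+b11^2+b12^2) + (a10^2+a11^2+a12^2)*(b00^2+b01^2+b02^2))/2 - (((a01*b02-a02*b01)*(a11*b12-a12*b11) + (a02*b00-a00*b02)*(a12*b10-a10*b12) + (a00*b01-a01*b00)*(a10*b11-a11*b10)) + (a00*b00+a01*b01+a02*b02)*(a10*b10+a11*b11+a12*b12))) := mul_nonneg (mul_nonneg hm0 hm1) (by linarith)
  have p02 := pairwise a00 a01 a02 b00 b01 b02 a20 a21 a22 b20 b21 b22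
  have t02 : (0:ℝ) ≤ m0*m2*(((a00^2+a01^2+a02^2)*(b20^2+b21^2+b22^2) + (a20^2+a21^2+a22^2)*(b00^2+b01^2+b02^2))/2 - (((a01*b02-a02*b01)*(a21*b22-a22*b21) + (a02*b00-a00*b02)*(a22*b20-a20*b22) + (a00*b01-a01*b00)*(a20*b21-a21*b20)) + (a00*b00+a01*b01+a02*b02)*(a20*b20+a21*b21+a22*b22))) := mul_nonneg (mul_nonneg hm0 hm2) (by linarith)
  have p12 := pairwise a10 a11 a12 b10 b11 b12 a20 a21 a22 b20 b21 b22
  have t12 : (0:ℝ) ≤ m1*m2*(((a10^2+a11^2+a12^2)*(b20^2+b21^2+b22^2) + (a20^2+a21^2+a22^2)*(b10^2+b11^2+b12^2))/2 - (((a11*b12-a12*b11)*(a21*b22-a22*b21) + (a12*b10-a10*b12)*(a22*b20-a20*b22) + (a10*b11-a11*b10)*(a20*b21-a21*b20)) + (a10*b10+a11*b11+a12*b12)*(a20*b20+a21*b21+a22*b22))) := mul_nonneg (mul_nonneg hm1 hm2) (by linarith)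
  linarith [t01, t02, t12]

theorem gram_ge_cross
    (m : Fin 3 → ℝ) (hm : ∀ i, 0 < m i)
    (δ δ' : Fin 3 → E3) :
    ((∑ i, m i * ‖δ i‖ ^ 2) * (∑ i, m i * ‖δ' i‖ ^ 2)
        - (∑ i, m i * (inner ℝ (δ i) (δ' i) : ℝ)) ^ 2
      ≥ ‖∑ i, m i • cross3 (δ i) (δ' i)‖ ^ 2) ∧
    (2 * (∑ i, m i * ‖δ i‖ ^ 2) * (((1 : ℝ)/2) * (∑ i, m i * ‖δ' i‖ ^ 2))
        - ((1 : ℝ)/4) * (2 * (∑ i, m i * (inner ℝ (δ i) (δ' i) : ℝ))) ^ 2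
      = (∑ i, m i * ‖δ i‖ ^ 2) * (∑ i, m i * ‖δ' i‖ ^ 2)
        - (∑ i, m i * (inner ℝ (δ i) (δ' i) : ℝ)) ^ 2) := by
  constructor
  · have hni : ∀ u : E3, ‖u‖^2 = u 0^2 + u 1^2 + u 2^2 := by
      intro u
      rw [EuclideanSpace.norm_eq, Real.sq_sqrt (by positivity)]
      simp [sq_abs, Fin.sum_univ_three]
    have hip : ∀ u v : E3, (inner ℝ u v : ℝ) = u 0 * v 0 + u 1 * v 1 + u 2 * v 2 := by
      intro u v
      simp [PiLp.inner_apply, RCLike.inner_apply, Fin.sum_univ_three, mul_comm]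
    rw [ge_iff_le]
    simp only [hni, hip, Fin.sum_univ_three]
    simp only [cross3, PiLp.add_apply, PiLp.smul_apply, smul_eq_mul,
      WithLp.equiv_symm_apply, PiLp.toLp_apply, Matrix.cons_val_zero, Matrix.cons_val_one,
      Matrix.head_cons, Matrix.cons_val_two, Matrix.tail_cons]
    linarith [main3 (m 0) (m 1) (m 2) (le_of_lt (hm 0)) (le_of_lt (hm 1)) (le_of_lt (hm 2))
      (δ 0 0) (δ 0 1) (δ 0 2) (δ 1 0) (δ 1 1) (δ 1 2) (δ 2 0) (δ 2 1) (δ 2 2) (δ' 0 0) (δ' 0 1) (δ' 0 2) (δ' 1 0) (δ' 1 1) (δ' 1 2) (δ' 2 0) (δ' 2 1) (δ' 2 2)]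
  · ring
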